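/- On the round 3-sphere S³ = SU(2), for each ψ in the (2j+2)-dimensional irreducible representation W_j of SU(2), the section x ↦ ψ (constant, in the left trivialization) is a spin (j+1/2) Killing spinor with Killing number 1/2, and the section x ↦ π_j(x⁻¹)ψ is a spin (j+1/2) Killing spinor with Killing number -1/2. These give spaces of Killing spinors of dimension exactly 2j+2 for each of μ = ±1/2. -/

import Mathlib

open NormedSpace

private lemma shift_deriv {W : Type*} [NormedAddCommGroup W] [NormedSpace ℝ W]
    {f : ℝ → W} {d : W} {t₀ : ℝ} (h : HasDerivAt (fun t => f (t₀ + t)) d 0) :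
    HasDerivAt f d t₀ := by
  have h2 := HasDerivAt.comp_const_add (f := fun t => f (t₀ + t)) (-t₀) t₀ (by simpa using h)
  simpa using h2

private lemma ode_unique {W : Type*} [NormedAddCommGroup W] [NormedSpace ℂ W]
    [FiniteDimensional ℂ W] (L : W →ₗ[ℂ] W) {f g : ℝ → W}
    (hf : ∀ t, HasDerivAt f (L (f t)) t) (hg : ∀ t, HasDerivAt g (L (g t)) t)
    (h0 : f 0 = g 0) : f = g := by
  funext t
  set L' := LinearMap.toContinuousLinearMap L with hL'
  have hv : ∀ u : ℝ, LipschitzOnWith ‖L'‖₊ (fun w => L' w) (Set.univ : Set W) :=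
    fun _ => L'.lipschitz.lipschitzOnWith
  have hmem : (0:ℝ) ∈ Set.Ioo (-(|t|+1)) (|t|+1) := by
    constructor <;> nlinarith [abs_nonneg t]
  have key := ODE_solution_unique_of_mem_Icc (v := fun _ w => L' w)
    (s := fun _ => (Set.univ : Set W)) (fun u _ => hv u) hmem
    (continuousOn_of_forall_continuousAt fun u _ => (hf u).continuousAt)
    (fun u _ => by simpa [hL'] using hf u)
    (fun _ _ => Set.mem_univ _)
    (continuousOn_of_forall_continuousAt fun u _ => (hg u).continuousAt)
    (fun u _ => by simpa [hL'] using hg u)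
    (fun _ _ => Set.mem_univ _) h0
  exact key ⟨by nlinarith [neg_abs_le t], by nlinarith [le_abs_self t]⟩

private lemma quat_exp_surj (y : unitary (Quaternion ℝ)) :
    ∃ ξ : Quaternion ℝ, ξ.re = 0 ∧ NormedSpace.exp ξ = (y : Quaternion ℝ) := by
  set q : Quaternion ℝ := (y : Quaternion ℝ) with hqdef
  have hnorm : Quaternion.normSq q = 1 := by
    have h1 : star q * q = 1 := (Unitary.mem_iff.mp y.2).1
    rw [Quaternion.star_mul_self, ← Quaternion.coe_one] at h1
    exact Quaternion.coe_injective h1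
  have him : ‖q.im‖ ^ 2 = 1 - q.re ^ 2 := by
    have h2 : Quaternion.normSq q.im = ‖q.im‖ ^ 2 := by
      rw [sq, Quaternion.normSq_eq_norm_mul_self]
    have h3 : Quaternion.normSq q = q.re ^ 2 + Quaternion.normSq q.im := by
      simp [Quaternion.normSq_def']
      ring
    rw [← h2]
    rw [h3] at hnorm
    linarith
  rcases eq_or_ne q.im 0 with h0 | h0
  · have hre2 : q.re ^ 2 = 1 := by
      rw [h0] at him
      simp at him
      linarith
    have hq' : (q.re : Quaternion ℝ) = q := by
      conv_rhs => rw [← Quaternion.re_add_im q]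
      rw [h0, add_zero]
    have : (q.re - 1) * (q.re + 1) = 0 := by nlinarith
    rcases mul_eq_zero.mp this with h | h
    · refine ⟨0, rfl, ?_⟩
      rw [NormedSpace.exp_zero, ← hq', show q.re = 1 by linarith]
      norm_num
    · have hre : q.re = -1 := by linarith
      refine ⟨⟨0, Real.pi, 0, 0⟩, rfl, ?_⟩
      set ξ : Quaternion ℝ := ⟨0, Real.pi, 0, 0⟩ with hξdef
      have h4 : ‖ξ‖ * ‖ξ‖ = Real.pi ^ 2 := by
        rw [← Quaternion.normSq_eq_norm_mul_self]
        rw [Quaternion.normSq_def']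
        simp [hξdef, Quaternion.normSq_def']
      have hnormξ : ‖ξ‖ = Real.pi := by
        nlinarith [norm_nonneg ξ, Real.pi_pos]
      rw [Quaternion.exp_of_re_eq_zero ξ rfl, hnormξ]
      rw [Real.sin_pi, Real.cos_pi]
      rw [← hq', hre]
      norm_num
  · have hvpos : 0 < ‖q.im‖ := norm_pos_iff.mpr h0
    have hre1 : q.re ^ 2 ≤ 1 := by nlinarith [sq_nonneg ‖q.im‖]
    have hle : -1 ≤ q.re ∧ q.re ≤ 1 := by constructor <;> nlinarith
    set θ := Real.arccos q.re with hθdef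
    have hcos : Real.cos θ = q.re := Real.cos_arccos hle.1 hle.2
    have hsin : Real.sin θ = ‖q.im‖ := by
      rw [hθdef, Real.sin_arccos, ← him]
      exact Real.sqrt_sq (norm_nonneg _)
    have hθpos : 0 < θ := by
      rcases lt_or_eq_of_le (Real.arccos_nonneg q.re) with h | h
      · exact h
      · exfalso
        rw [hθdef, ← h, Real.sin_zero] at hsin
        linarith
    refine ⟨(θ / ‖q.im‖) • q.im, ?_, ?_⟩
    · rw [Quaternion.re_smul, Quaternion.re_im, smul_eq_mul, mul_zero]
    · have hre0 : ((θ / ‖q.im‖) • q.im).re = 0 := by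
        rw [Quaternion.re_smul, Quaternion.re_im, smul_eq_mul, mul_zero]
      have hnξ : ‖(θ / ‖q.im‖) • q.im‖ = θ := by
        rw [norm_smul, Real.norm_eq_abs, abs_of_pos (div_pos hθpos hvpos),
          div_mul_cancel₀ _ (ne_of_gt hvpos)]
      rw [Quaternion.exp_of_re_eq_zero _ hre0, hnξ, hcos, smul_smul]
      have hcoef : Real.sin θ / θ * (θ / ‖q.im‖) = 1 := by
        rw [hsin]
        field_simp
      rw [hcoef, one_smul, Quaternion.re_add_im]


/-- The Killing spinor equation on `S³ = SU(2)` (realized as the group `Sp(1)` of unit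
quaternions), in the left trivialization of the spin `(j+1/2)` bundle `S_j`: a section
`s : SU(2) → W_j` is a Killing spinor with Killing number `μ` iff for every point `x` and
every `ξ ∈ su(2)` (an imaginary quaternion), the derivative of `s` along the
left-invariant curve `t ↦ x·exp(tξ)` satisfies
`∂_ξ s + (1/2)π_j(ξ)s = μ π_j(ξ)s`, i.e. equals `(μ - 1/2)·dπ(ξ)(s x)`. -/
def IsKillingSpinorS3 {W : Type*} [NormedAddCommGroup W] [NormedSpace ℂ W]
    (dπ : Quaternion ℝ → (W →ₗ[ℂ] W))
    (E : ∀ ξ : Quaternion ℝ, ξ.re = 0 → ℝ → unitary (Quaternion ℝ))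
    (μ : ℂ) (s : unitary (Quaternion ℝ) → W) : Prop :=
  ∀ (x : unitary (Quaternion ℝ)) (ξ : Quaternion ℝ) (hξ : ξ.re = 0),
    HasDerivAt (fun t : ℝ => s (x * E ξ hξ t)) ((μ - 1 / 2) • dπ ξ (s x)) 0

/-- On the round 3-sphere `S³ = SU(2)` (unit quaternions), for each `ψ` in the
`(2j+2)`-dimensional irreducible representation `W_j` of `SU(2)`, the constant section
`x ↦ ψ` (in the left trivialization) is a spin `(j+1/2)` Killing spinor with Killing
number `1/2`, and `x ↦ π_j(x⁻¹)ψ` is one with Killing number `-1/2`; moreover every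
Killing spinor with `μ = ±1/2` is of this form, so each of the two spaces of Killing
spinors has dimension exactly `2j+2`.  Here `π` is the group representation, `dπ` the
induced Lie algebra representation (`hder` expresses the compatibility along the
one-parameter subgroups `E ξ _ t = exp(tξ)`). -/
theorem killing_spinors_on_S3 (j : ℕ) (W : Type*) [NormedAddCommGroup W]
    [NormedSpace ℂ W] [FiniteDimensional ℂ W]
    (hdim : Module.finrank ℂ W = 2 * j + 2)
    (π : unitary (Quaternion ℝ) →* (W ≃ₗ[ℂ] W))
    (hirr : ∀ q : Submodule ℂ W,
      (∀ g : unitary (Quaternion ℝ), q.map (π g).toLinearMap ≤ q) → q = ⊥ ∨ q = ⊤)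
    (dπ : Quaternion ℝ → (W →ₗ[ℂ] W))
    (hdπneg : ∀ ξ, dπ (-ξ) = -dπ ξ)
    (E : ∀ ξ : Quaternion ℝ, ξ.re = 0 → ℝ → unitary (Quaternion ℝ))
    (hE : ∀ (ξ : Quaternion ℝ) (hξ : ξ.re = 0) (t : ℝ),
      ((E ξ hξ t : Quaternion ℝ)) = NormedSpace.exp (t • ξ))
    (hder : ∀ (ξ : Quaternion ℝ) (hξ : ξ.re = 0) (ψ : W),
      HasDerivAt (fun t : ℝ => π (E ξ hξ t) ψ) (dπ ξ ψ) 0) :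
    (∀ ψ : W, IsKillingSpinorS3 dπ E (1 / 2) fun _ => ψ) ∧
    (∀ ψ : W, IsKillingSpinorS3 dπ E (-(1 / 2)) fun x => π x⁻¹ ψ) ∧
    (∀ s, IsKillingSpinorS3 dπ E (1 / 2) s → ∃ ψ : W, s = fun _ => ψ) ∧
    (∀ s, IsKillingSpinorS3 dπ E (-(1 / 2)) s → ∃ ψ : W, s = fun x => π x⁻¹ ψ) := by
  have hE0 : ∀ (ξ : Quaternion ℝ) (hξ : ξ.re = 0), E ξ hξ 0 = 1 := by
    intro ξ hξ
    apply Subtype.ext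
    rw [hE]
    simp
  have hEadd : ∀ (ξ : Quaternion ℝ) (hξ : ξ.re = 0) (a b : ℝ),
      E ξ hξ (a + b) = E ξ hξ a * E ξ hξ b := by
    intro ξ hξ a b
    letI : NormedAlgebra ℚ (Quaternion ℝ) := .restrictScalars ℚ ℝ _
    apply Subtype.ext
    rw [MulMemClass.coe_mul, hE, hE, hE, add_smul,
      NormedSpace.exp_add_of_commute (((Commute.refl ξ).smul_right b).smul_left a)]
  have hEcomm : ∀ (ξ : Quaternion ℝ) (hξ : ξ.re = 0) (a b : ℝ),
      E ξ hξ a * E ξ hξ b = E ξ hξ b * E ξ hξ a := by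
    intro ξ hξ a b
    rw [← hEadd, ← hEadd, add_comm]
  have hEinv : ∀ (ξ : Quaternion ℝ) (hξ : ξ.re = 0) (hξ' : (-ξ).re = 0) (t : ℝ),
      (E ξ hξ t)⁻¹ = E (-ξ) hξ' t := by
    intro ξ hξ hξ' t
    letI : NormedAlgebra ℚ (Quaternion ℝ) := .restrictScalars ℚ ℝ _
    apply inv_eq_of_mul_eq_one_right
    apply Subtype.ext
    rw [MulMemClass.coe_mul, hE, hE, ← NormedSpace.exp_add_of_commute
      ((((Commute.refl ξ).neg_right).smul_right t).smul_left t)]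
    rw [smul_neg, add_neg_cancel, NormedSpace.exp_zero]
    rfl
  have hπmul : ∀ (a b : unitary (Quaternion ℝ)) (w : W), π (a * b) w = π a (π b w) := by
    intro a b w
    rw [map_mul]
    rfl
  have hder' : ∀ (ξ : Quaternion ℝ) (hξ : ξ.re = 0) (ψ : W) (t₀ : ℝ),
      HasDerivAt (fun t => π (E ξ hξ t) ψ) (dπ ξ (π (E ξ hξ t₀) ψ)) t₀ := by
    intro ξ hξ ψ t₀
    apply shift_deriv
    simpa only [hEadd, hEcomm ξ hξ t₀, hπmul] using hder ξ hξ (π (E ξ hξ t₀) ψ)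
  have hK : ∀ (μ : ℂ) (s : unitary (Quaternion ℝ) → W), IsKillingSpinorS3 dπ E μ s →
      ∀ (x : unitary (Quaternion ℝ)) (ξ : Quaternion ℝ) (hξ : ξ.re = 0) (t₀ : ℝ),
      HasDerivAt (fun t => s (x * E ξ hξ t)) ((μ - 1/2) • dπ ξ (s (x * E ξ hξ t₀))) t₀ := by
    intro μ s hs x ξ hξ t₀
    apply shift_deriv
    simpa only [hEadd, ← mul_assoc] using hs (x * E ξ hξ t₀) ξ hξ
  have hsurj : ∀ y : unitary (Quaternion ℝ), ∃ (ξ : Quaternion ℝ) (hξ : ξ.re = 0),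
      E ξ hξ 1 = y := by
    intro y
    obtain ⟨ξ, hξ, hexp⟩ := quat_exp_surj y
    exact ⟨ξ, hξ, Subtype.ext (by rw [hE, one_smul]; exact hexp)⟩
  refine ⟨?_, ?_, ?_, ?_⟩
  · intro ψ x ξ hξ
    simpa using hasDerivAt_const (0:ℝ) ψ
  · intro ψ x ξ hξ
    have hξ' : (-ξ).re = 0 := by simp [hξ]
    have key : (fun t : ℝ => π (x * E ξ hξ t)⁻¹ ψ) = fun t => π (E (-ξ) hξ' t) (π x⁻¹ ψ) := by
      funext t
      rw [mul_inv_rev, hEinv ξ hξ hξ', ← hπmul]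
    show HasDerivAt (fun t : ℝ => π (x * E ξ hξ t)⁻¹ ψ) _ 0
    rw [key]
    have h := hder (-ξ) hξ' (π x⁻¹ ψ)
    rw [hdπneg] at h
    convert h using 1
    simp only [LinearMap.neg_apply]
    norm_num
  · intro s hs
    refine ⟨s 1, ?_⟩
    funext y
    obtain ⟨ξ, hξ, hEy⟩ := hsurj y
    have hf : ∀ t : ℝ, HasDerivAt (fun t => s (1 * E ξ hξ t))
        ((0 : W →ₗ[ℂ] W) (s (1 * E ξ hξ t))) t := by
      intro t
      have h := hK (1/2) s hs 1 ξ hξ t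
      norm_num at h
      simpa using h
    have hg : ∀ t : ℝ, HasDerivAt (fun _ : ℝ => s (1 * E ξ hξ 0))
        ((0 : W →ₗ[ℂ] W) (s (1 * E ξ hξ 0))) t := by
      intro t
      simpa using hasDerivAt_const t (s (1 * E ξ hξ 0))
    have heq := ode_unique (0 : W →ₗ[ℂ] W) hf hg rfl
    have h1 := congrFun heq 1
    simp only [one_mul, hEy, hE0] at h1
    exact h1
  · intro s hs
    refine ⟨s 1, ?_⟩
    funext y
    obtain ⟨ξ, hξ, hEy⟩ := hsurj y
    have hξ' : (-ξ).re = 0 := by simp [hξ]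
    have hf : ∀ t : ℝ, HasDerivAt (fun t => s (1 * E ξ hξ t))
        ((-dπ ξ) (s (1 * E ξ hξ t))) t := by
      intro t
      have h := hK (-(1/2)) s hs 1 ξ hξ t
      have : ((-(1/2) : ℂ) - 1/2) = -1 := by norm_num
      rw [this] at h
      simpa [LinearMap.neg_apply] using h
    have hg : ∀ t : ℝ, HasDerivAt (fun t => π (E (-ξ) hξ' t) (s 1))
        ((-dπ ξ) (π (E (-ξ) hξ' t) (s 1))) t := by
      intro t
      have h := hder' (-ξ) hξ' (s 1) t
      rw [hdπneg] at h
      exact h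
    have h0 : s (1 * E ξ hξ 0) = π (E (-ξ) hξ' 0) (s 1) := by
      rw [hE0, hE0, one_mul, map_one]
      rfl
    have heq := ode_unique (-dπ ξ) hf hg h0
    have h1 := congrFun heq 1
    simp only [one_mul, hEy] at h1
    rw [h1, ← hEinv ξ hξ hξ', hEy]
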